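/- For every k ∈ ℕ there exists a connected graph G with a vertex cover U such that: every vertex of I = V(G)\U has degree at most 3; every vertex v ∈ U has |N[v] ∩ U| ≤ 3; every isometric path in G contains at most 3 vertices of U; and yet c(G) > k. -/

import Mathlib

open SimpleGraph

variable {V : Type*}

/-- A (positional) strategy for `k` cops on the graph `G`: an initial placement and a
move function; each cop may stay or move to an adjacent vertex. -/
structure CopStrat (G : SimpleGraph V) (k : ℕ) where
  init : Fin k → V
  move : (Fin k → V) → V → Fin k → V
  valid : ∀ c r i, move c r i = c i ∨ G.Adj (c i) (move c r i)

/-- A strategy for the robber: an initial placement (knowing the cops' placement) and a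
move function; the robber may stay or move to an adjacent vertex. -/
structure RobStrat (G : SimpleGraph V) (k : ℕ) where
  init : (Fin k → V) → V
  move : (Fin k → V) → V → V
  valid : ∀ c r, move c r = r ∨ G.Adj r (move c r)

/-- The play determined by initial placements and move functions: position of the cops and
of the robber after `n` full rounds (cops move first in each round). -/
def gplay {k : ℕ} (ci : Fin k → V) (cm : (Fin k → V) → V → Fin k → V)
    (ri : (Fin k → V) → V) (rm : (Fin k → V) → V → V) : ℕ → (Fin k → V) × V
  | 0 => (ci, ri ci)
  | n + 1 =>
    let p := gplay ci cm ri rm n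
    let c' := cm p.1 p.2
    (c', rm c' p.2)

/-- The robber is caught: at some moment (either on a cops' move, or because the
positions already coincide) a cop occupies the robber's vertex. -/
def gCaught {k : ℕ} (ci : Fin k → V) (cm : (Fin k → V) → V → Fin k → V)
    (ri : (Fin k → V) → V) (rm : (Fin k → V) → V → V) : Prop :=
  ∃ n, ∃ i,
    (gplay ci cm ri rm n).1 i = (gplay ci cm ri rm n).2 ∨
      cm (gplay ci cm ri rm n).1 (gplay ci cm ri rm n).2 i = (gplay ci cm ri rm n).2

/-- `k` cops have a winning strategy on `G`. -/
def CopsWin (G : SimpleGraph V) (k : ℕ) : Prop :=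
  ∃ CS : CopStrat G k, ∀ RS : RobStrat G k,
    gCaught CS.init CS.move RS.init RS.move

/-- The cop number of `G`. -/
noncomputable def copNumber (G : SimpleGraph V) : ℕ := sInf {k | CopsWin G k}





open scoped Classical

namespace CopWork

variable (n s : ℕ)

abbrev V0 := {A : Finset (Fin n) // A.card = s}

def H : SimpleGraph (V0 n s) where
  Adj A B := A ≠ B ∧ Disjoint A.1 B.1
  symm := by constructor; intro A B h; exact ⟨h.1.symm, h.2.symm⟩
  loopless := by constructor; intro A h; exact h.1 rfl

abbrev EV := ↥(H n s).edgeSet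

abbrev V' := V0 n s ⊕ EV n s

def avoid : V' n s → Finset (Fin n)
  | .inl a => a.1
  | .inr f => Sym2.lift ⟨fun a b => a.1 ∪ b.1, fun a b => Finset.union_comm _ _⟩ f.1

variable {n s}

lemma edge_rep (e : EV n s) : ∃ p q : V0 n s, (H n s).Adj p q ∧ e.1 = s(p,q) := by
  obtain ⟨e, he⟩ := e
  induction e with
  | _ p q => exact ⟨p, q, he, rfl⟩

lemma mem_avoid (f : EV n s) (a : V0 n s) (ha : a ∈ f.1) : a.1 ⊆ avoid n s (.inr f) := by
  obtain ⟨p, q, hpq, hrep⟩ := edge_rep f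
  simp only [avoid, hrep, Sym2.lift_mk]
  rw [hrep, Sym2.mem_iff] at ha
  rcases ha with rfl | rfl
  · exact Finset.subset_union_left
  · exact Finset.subset_union_right

lemma card_avoid (v : V' n s) : (avoid n s v).card ≤ 2 * s := by
  match v with
  | .inl a => simp [avoid, a.2]; omega
  | .inr f =>
    obtain ⟨p, q, hpq, hrep⟩ := edge_rep f
    simp only [avoid, hrep, Sym2.lift_mk]
    calc (p.1 ∪ q.1).card ≤ p.1.card + q.1.card := Finset.card_union_le _ _
    _ = 2 * s := by rw [p.2, q.2]; ring

variable {k : ℕ}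

lemma evade' (hs : s = k + 1) (hn : n = 4 * (k+1)^2) {j : ℕ} (hj : j ≤ k)
    (u : V0 n s) (c : Fin j → V' n s) :
    ∃ w : V0 n s, (H n s).Adj u w ∧
      (∀ i a, c i = .inl a → w ≠ a ∧ (a ≠ u → ¬ Disjoint w.1 a.1)) ∧
      (∀ i (f : EV n s) (a : V0 n s), c i = .inr f → a ∈ f.1 → w ≠ a) := by
  -- selection of meeting points
  set xset : Fin j → Finset (Fin n) := fun i =>
    if h : ∃ x : Fin n, ∃ a : V0 n s, c i = Sum.inl a ∧ x ∈ a.1 \ u.1 then {h.choose} else ∅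
    with hxset
  have hxsub : ∀ i, xset i ⊆ avoid n s (c i) \ u.1 := by
    intro i z hz
    rw [hxset] at hz
    dsimp only at hz
    split_ifs at hz with h
    · simp only [Finset.mem_singleton] at hz
      obtain ⟨a, hca, hx⟩ := h.choose_spec
      subst hz
      have hav : avoid n s (c i) = a.1 := by rw [hca]; rfl
      rw [hav]
      simpa using hx
    · simp at hz
  have hxcard : ∀ i, (xset i).card ≤ 1 := by
    intro i; rw [hxset]; dsimp only; split_ifs <;> simp
  set X : Finset (Fin n) := Finset.univ.biUnion xset with hX
  set bad : Finset (Fin n) := u.1 ∪ X ∪ Finset.univ.biUnion (fun i => avoid n s (c i)) with hbad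
  have hbadcard : bad.card < n := by
    have h1 : X.card ≤ j := by
      calc X.card ≤ ∑ i, (xset i).card := Finset.card_biUnion_le
      _ ≤ ∑ _i : Fin j, 1 := Finset.sum_le_sum (fun i _ => hxcard i)
      _ = j := by simp
    have h2 : (Finset.univ.biUnion (fun i => avoid n s (c i))).card ≤ j * (2*s) := by
      calc _ ≤ ∑ i, (avoid n s (c i)).card := Finset.card_biUnion_le
      _ ≤ ∑ _i : Fin j, 2*s := Finset.sum_le_sum (fun i _ => card_avoid (c i))
      _ = j * (2*s) := by simp [mul_comm]
    have h3 : bad.card ≤ u.1.card + X.card + (Finset.univ.biUnion (fun i => avoid n s (c i))).card := by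
      calc bad.card ≤ (u.1 ∪ X).card + _ := Finset.card_union_le _ _
      _ ≤ u.1.card + X.card + _ := by gcongr; exact Finset.card_union_le _ _
    have := u.2
    subst hs hn
    nlinarith [h1, h2, h3, this]
  obtain ⟨y, hy⟩ : ∃ y, y ∉ bad := by
    have : (badᶜ).Nonempty := by
      rw [← Finset.card_pos, Finset.card_compl]
      simpa using hbadcard
    obtain ⟨y, hy⟩ := this
    exact ⟨y, by simpa using hy⟩
  have hyu : y ∉ u.1 := fun h => hy (by simp [hbad, h])
  have hyX : y ∉ X := fun h => hy (by simp [hbad, h])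
  have hyav : ∀ i, y ∉ avoid n s (c i) := by
    intro i h
    exact hy (by simp only [hbad, Finset.mem_union, Finset.mem_biUnion]; right; exact ⟨i, Finset.mem_univ i, h⟩)
  -- build w
  have hbase_sub : insert y X ⊆ Finset.univ \ u.1 := by
    intro z hz
    rcases Finset.mem_insert.1 hz with rfl | hz
    · simp [hyu]
    · obtain ⟨i, _, hzi⟩ := Finset.mem_biUnion.1 hz
      have := hxsub i hzi
      simp [Finset.mem_sdiff] at this ⊢
      exact this.2
  have hbase_card : (insert y X).card ≤ s := by
    have h1 : X.card ≤ j := by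
      calc X.card ≤ ∑ i, (xset i).card := Finset.card_biUnion_le
      _ ≤ ∑ _i : Fin j, 1 := Finset.sum_le_sum (fun i _ => hxcard i)
      _ = j := by simp
    have := Finset.card_insert_le y X
    omega
  have hsdcard : s ≤ (Finset.univ \ u.1).card := by
    rw [Finset.card_sdiff_of_subset (Finset.subset_univ _)]
    have hcu : (Finset.univ : Finset (Fin n)).card = n := by simp
    rw [hcu, u.2]
    have h4 : 2 * (k+1) ≤ 4 * (k+1)^2 := by nlinarith
    omega
  obtain ⟨w', hw'1, hw'2, hw'3⟩ := Finset.exists_subsuperset_card_eq hbase_sub hbase_card hsdcard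
  have hwdisj : Disjoint w' u.1 := by
    rw [Finset.disjoint_left]
    intro z hz hzu
    have := hw'2 hz
    simp [Finset.mem_sdiff] at this
    exact this hzu
  have hyw : y ∈ w' := hw'1 (Finset.mem_insert_self y X)
  refine ⟨⟨w', hw'3⟩, ⟨?_, ?_⟩, ?_, ?_⟩
  · -- u ≠ w
    intro hequ
    have : y ∈ u.1 := by rw [Subtype.ext_iff] at hequ; rw [hequ]; exact hyw
    exact hyu this
  · exact hwdisj.symm
  · intro i a hca
    constructor
    · intro hwa
      have : y ∈ a.1 := by
        rw [Subtype.ext_iff] at hwa; rw [← hwa]; exact hyw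
      exact hyav i (by rw [hca]; simpa [avoid] using this)
    · intro hau
      have hne : (a.1 \ u.1).Nonempty := by
        rw [Finset.sdiff_nonempty]
        intro hsub
        exact hau (Subtype.ext (Finset.eq_of_subset_of_card_le hsub (by rw [a.2, u.2])))
      have hex : ∃ x : Fin n, ∃ a' : V0 n s, c i = Sum.inl a' ∧ x ∈ a'.1 \ u.1 := by
        obtain ⟨x, hx⟩ := hne
        exact ⟨x, a, hca, hx⟩
      have hxin : xset i = {hex.choose} := by simp only [hxset]; exact dif_pos hex
      obtain ⟨a', hca', hxa'⟩ := hex.choose_spec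
      have haa : a' = a := by rw [hca] at hca'; exact (Sum.inl.inj hca').symm
      rw [Finset.not_disjoint_iff]
      refine ⟨hex.choose, ?_, ?_⟩
      · apply hw'1
        apply Finset.mem_insert_of_mem
        rw [hX]
        exact Finset.mem_biUnion.2 ⟨i, Finset.mem_univ i, by rw [hxin]; simp⟩
      · subst haa; exact (Finset.mem_sdiff.1 hxa').1
  · intro i f a hcf haf hwa
    have : y ∈ a.1 := by rw [Subtype.ext_iff] at hwa; rw [← hwa]; exact hyw
    have := mem_avoid f a haf this
    rw [← hcf] at this
    exact hyav i this

variable (n s)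

def G' : SimpleGraph (V' n s) where
  Adj x y := match x, y with
    | .inl u, .inr e => u ∈ e.1
    | .inr e, .inl u => u ∈ e.1
    | _, _ => False
  symm := by constructor; rintro (u|e) (v|f) h <;> simp_all
  loopless := by constructor; rintro (u|e) h <;> simp_all

variable {n s}

lemma G'_adj_lr {u : V0 n s} {e : EV n s} : (G' n s).Adj (.inl u) (.inr e) ↔ u ∈ e.1 := Iff.rfl
lemma G'_adj_rl {u : V0 n s} {e : EV n s} : (G' n s).Adj (.inr e) (.inl u) ↔ u ∈ e.1 := Iff.rfl
lemma G'_adj_ll {u v : V0 n s} : ¬ (G' n s).Adj (.inl u) (.inl v) := fun h => h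
lemma G'_adj_rr {e f : EV n s} : ¬ (G' n s).Adj (.inr e) (.inr f) := fun h => h

def NotNear (v r : V' n s) : Prop := v ≠ r ∧ ¬ (G' n s).Adj v r

def SafeW {j : ℕ} (c : Fin j → V' n s) (w : V0 n s) : Prop :=
  ∀ i, (∀ a, c i = .inl a → a ≠ w ∧ ¬ (H n s).Adj a w) ∧ (∀ f, c i = .inr f → w ∉ f.1)

def Inv {j : ℕ} (c : Fin j → V' n s) (r : V' n s) : Prop :=
  (∀ i, NotNear (c i) r) ∧ (∀ e : EV n s, r = .inr e → ∃ w, w ∈ e.1 ∧ SafeW c w)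

noncomputable def rmove {j : ℕ} (c : Fin j → V' n s) (r : V' n s) : V' n s :=
  match r with
  | .inl u =>
    if ∀ i, NotNear (c i) (.inl u) then .inl u
    else if h : ∃ w, (H n s).Adj u w ∧ SafeW c w then
      .inr ⟨s(u, h.choose), (SimpleGraph.mem_edgeSet _).2 h.choose_spec.1⟩
    else .inl u
  | .inr e =>
    if h : ∃ w, w ∈ e.1 ∧ (∀ i, NotNear (c i) (.inl w)) then .inl h.choose else .inr e

lemma rmove_valid {j : ℕ} (c : Fin j → V' n s) (r : V' n s) :
    rmove c r = r ∨ (G' n s).Adj r (rmove c r) := by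
  match r with
  | .inl u =>
    rw [rmove]
    split_ifs with h0 h
    · exact Or.inl rfl
    · right
      rw [G'_adj_lr]
      exact Sym2.mem_mk_left _ _
    · exact Or.inl rfl
  | .inr e =>
    rw [rmove]
    split_ifs with h
    · right
      rw [G'_adj_rl]
      exact h.choose_spec.1
    · exact Or.inl rfl

/-- existence of an evading neighbour, in the form needed for fleeing. -/
lemma flee_exists (hs : s = k + 1) (hn : n = 4 * (k+1)^2) {j : ℕ} (hj : j ≤ k)
    (u : V0 n s) (c : Fin j → V' n s) (hne : ∀ i, c i ≠ .inl u) :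
    ∃ w, (H n s).Adj u w ∧ SafeW c w := by
  obtain ⟨w, hadj, h2, h3⟩ := evade' hs hn hj u c
  refine ⟨w, hadj, fun i => ⟨?_, ?_⟩⟩
  · intro a hca
    have hau : a ≠ u := by rintro rfl; exact hne i hca
    obtain ⟨hwa, hdis⟩ := h2 i a hca
    exact ⟨hwa.symm, fun hadj' => (hdis hau) hadj'.2.symm⟩
  · intro f hcf hwf
    exact h3 i f w hcf hwf rfl

lemma init_exists (hs : s = k + 1) (hn : n = 4 * (k+1)^2) {j : ℕ} (hj : j ≤ k)
    (c : Fin j → V' n s) : ∃ u0 : V0 n s, ∀ i, NotNear (c i) (.inl u0) := by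
  have hustar : ∃ u : V0 n s, True := by
    obtain ⟨t, _, ht⟩ := Finset.exists_subset_card_eq (show s ≤ (Finset.univ : Finset (Fin n)).card by
      simp [hs, hn]; nlinarith)
    exact ⟨⟨t, ht⟩, trivial⟩
  obtain ⟨ustar, -⟩ := hustar
  obtain ⟨w, hadj, h2, h3⟩ := evade' hs hn hj ustar c
  refine ⟨w, fun i => ?_⟩
  constructor
  · cases hci : c i with
    | inl a =>
      intro hh
      exact (h2 i a hci).1 (Sum.inl.inj hh).symm
    | inr f => simp
  · cases hci : c i with
    | inl a => exact G'_adj_ll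
    | inr f =>
      rw [G'_adj_rl]
      intro hwf
      exact h3 i f w hci hwf rfl

lemma nocapture {j : ℕ} {c : Fin j → V' n s} {r : V' n s} (hInv : Inv c r)
    {c' : Fin j → V' n s} (hmv : ∀ i, c' i = c i ∨ (G' n s).Adj (c i) (c' i)) :
    ∀ i, c' i ≠ r := by
  intro i he
  rcases hmv i with h | h
  · exact (hInv.1 i).1 (h ▸ he)
  · exact (hInv.1 i).2 (he ▸ h)

lemma inv_step (hs : s = k + 1) (hn : n = 4 * (k+1)^2) {j : ℕ} (hj : j ≤ k)
    {c c' : Fin j → V' n s} {r : V' n s} (hInv : Inv c r)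
    (hmv : ∀ i, c' i = c i ∨ (G' n s).Adj (c i) (c' i)) :
    Inv c' (rmove c' r) := by
  have hne : ∀ i, c' i ≠ r := nocapture hInv hmv
  match r with
  | .inl u =>
    rw [rmove]
    by_cases h0 : ∀ i, NotNear (c' i) (.inl u)
    · rw [if_pos h0]
      exact ⟨h0, fun e he => by exact absurd he (by simp)⟩
    · rw [if_neg h0]
      have hex : ∃ w, (H n s).Adj u w ∧ SafeW c' w := flee_exists hs hn hj u c' hne
      rw [dif_pos hex]
      set w := hex.choose with hw
      have hspec := hex.choose_spec
      set e : EV n s := ⟨s(u, w), (SimpleGraph.mem_edgeSet _).2 hspec.1⟩ with he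
      constructor
      · intro i
        constructor
        · cases hci : c' i with
          | inl a => simp
          | inr f =>
            intro hh
            have hfe : f = e := Sum.inr.inj hh
            have : w ∈ f.1 := by rw [hfe, he]; exact Sym2.mem_mk_right _ _
            exact (hspec.2 i).2 f hci this
        · cases hci : c' i with
          | inl a =>
            rw [G'_adj_lr, he]
            intro hmem
            rcases Sym2.mem_iff.1 hmem with rfl | rfl
            · exact hne i (by rw [hci])
            · exact ((hspec.2 i).1 _ hci).1 rfl
          | inr f => exact G'_adj_rr
      · intro e' he'
        have : e' = e := (Sum.inr.inj he'.symm)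
        subst this
        exact ⟨w, by rw [he]; exact Sym2.mem_mk_right _ _, hspec.2⟩
  | .inr e =>
    rw [rmove]
    obtain ⟨w, hwe, hsafe⟩ := hInv.2 e rfl
    have hclaim : ∀ i, NotNear (c' i) (.inl w) := by
      intro i
      rcases hmv i with hstay | hadj
      · -- c' i = c i
        cases hci : c i with
        | inl a0 =>
          obtain ⟨ha0w, ha0adj⟩ := (hsafe i).1 a0 hci
          rw [hstay, hci]
          exact ⟨by simp [ha0w], G'_adj_ll⟩
        | inr f0 =>
          have hwf0 := (hsafe i).2 f0 hci
          rw [hstay, hci]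
          exact ⟨by simp, by rw [G'_adj_rl]; exact hwf0⟩
      · cases hci : c i with
        | inl a0 =>
          obtain ⟨ha0w, ha0adj⟩ := (hsafe i).1 a0 hci
          rw [hci] at hadj
          -- c' i must be inr f with a0 ∈ f
          cases hcpi : c' i with
          | inl b => rw [hcpi] at hadj; exact absurd hadj G'_adj_ll
          | inr f =>
            rw [hcpi] at hadj
            rw [G'_adj_lr] at hadj
            refine ⟨by simp, ?_⟩
            rw [G'_adj_rl]
            intro hwf
            have : f.1 = s(a0, w) := (Sym2.mem_and_mem_iff ha0w).1 ⟨hadj, hwf⟩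
            have hfe : (s(a0, w) : Sym2 (V0 n s)) ∈ (H n s).edgeSet := this ▸ f.2
            exact ha0adj ((SimpleGraph.mem_edgeSet _).1 hfe)
        | inr f0 =>
          have hwf0 := (hsafe i).2 f0 hci
          rw [hci] at hadj
          cases hcpi : c' i with
          | inl b =>
            rw [hcpi] at hadj
            rw [G'_adj_rl] at hadj
            refine ⟨?_, G'_adj_ll⟩
            intro hh
            have : b = w := Sum.inl.inj hh
            exact hwf0 (this ▸ hadj)
          | inr f => rw [hcpi] at hadj; exact absurd hadj G'_adj_rr
    have hex : ∃ w', w' ∈ e.1 ∧ (∀ i, NotNear (c' i) (.inl w')) := ⟨w, hwe, hclaim⟩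
    rw [dif_pos hex]
    exact ⟨hex.choose_spec.2, fun e' he' => by exact absurd he' (by simp)⟩


lemma no_copswin (hs : s = k + 1) (hn : n = 4 * (k+1)^2) {j : ℕ} (hj : j ≤ k) :
    ¬ CopsWin (G' n s) j := by
  rintro ⟨CS, hw⟩
  set RS : RobStrat (G' n s) j :=
    { init := fun c => .inl (init_exists hs hn hj c).choose
      move := fun c r => rmove c r
      valid := fun c r => rmove_valid c r } with hRS
  have hInv : ∀ m, Inv ((gplay CS.init CS.move RS.init RS.move m).1)
      ((gplay CS.init CS.move RS.init RS.move m).2) := by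
    intro m
    induction m with
    | zero =>
      constructor
      · intro i
        exact (init_exists hs hn hj CS.init).choose_spec i
      · intro e he
        exact absurd he (by simp [gplay, hRS])
    | succ m ih =>
      have hmv : ∀ i, CS.move (gplay CS.init CS.move RS.init RS.move m).1
          (gplay CS.init CS.move RS.init RS.move m).2 i
          = (gplay CS.init CS.move RS.init RS.move m).1 i ∨
          (G' n s).Adj ((gplay CS.init CS.move RS.init RS.move m).1 i)
            (CS.move (gplay CS.init CS.move RS.init RS.move m).1
              (gplay CS.init CS.move RS.init RS.move m).2 i) :=
        CS.valid _ _
      exact inv_step hs hn hj ih hmv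
  obtain ⟨m, i, hcatch⟩ := hw RS
  rcases hcatch with h | h
  · exact ((hInv m).1 i).1 h
  · have hmv := CS.valid (gplay CS.init CS.move RS.init RS.move m).1
      (gplay CS.init CS.move RS.init RS.move m).2 i
    rcases hmv with h2 | h2
    · exact ((hInv m).1 i).1 (h2 ▸ h)
    · exact ((hInv m).1 i).2 (h ▸ h2)


section Geometry

variable (hs1 : 1 ≤ s) (hn3 : 3 * s ≤ n)

include hs1 in
lemma disj_ne {z u : V0 n s} (h : Disjoint z.1 u.1) : z ≠ u := by
  intro hzu
  subst hzu
  rw [disjoint_self] at h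
  have hz := z.2
  rw [h] at hz
  simp at hz
  omega

include hs1 hn3 in
lemma common_nbr (u v : V0 n s) : ∃ z : V0 n s, (H n s).Adj u z ∧ (H n s).Adj z v := by
  have hcard : s ≤ (Finset.univ \ (u.1 ∪ v.1)).card := by
    have h1 : (u.1 ∪ v.1).card ≤ 2 * s := by
      calc (u.1 ∪ v.1).card ≤ u.1.card + v.1.card := Finset.card_union_le _ _
      _ = 2 * s := by rw [u.2, v.2]; ring
    have h2 := Finset.card_sdiff_of_subset (Finset.subset_univ (u.1 ∪ v.1))
    have h3 : (Finset.univ : Finset (Fin n)).card = n := by simp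
    omega
  obtain ⟨t, ht1, ht2⟩ := Finset.exists_subset_card_eq hcard
  have htu : Disjoint t u.1 := by
    rw [Finset.disjoint_left]
    intro z hz hzu
    have := ht1 hz
    rw [Finset.mem_sdiff] at this
    exact this.2 (Finset.mem_union_left _ hzu)
  have htv : Disjoint t v.1 := by
    rw [Finset.disjoint_left]
    intro z hz hzv
    have := ht1 hz
    rw [Finset.mem_sdiff] at this
    exact this.2 (Finset.mem_union_right _ hzv)
  refine ⟨⟨t, ht2⟩, ⟨?_, htu.symm⟩, ⟨?_, htv⟩⟩
  · exact (disj_ne hs1 (htu : Disjoint (⟨t, ht2⟩ : V0 n s).1 u.1)).symm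
  · exact disj_ne hs1 htv

def ew {u z : V0 n s} (h : (H n s).Adj u z) : EV n s := ⟨s(u,z), (SimpleGraph.mem_edgeSet _).2 h⟩

def w2 {u z : V0 n s} (h : (H n s).Adj u z) : (G' n s).Walk (.inl u) (.inl z) :=
  Walk.cons (by rw [G'_adj_lr]; exact Sym2.mem_mk_left _ _ : (G' n s).Adj (.inl u) (.inr (ew h)))
    (Walk.cons (by rw [G'_adj_rl]; exact Sym2.mem_mk_right _ _) Walk.nil)

lemma w2_length {u z : V0 n s} (h : (H n s).Adj u z) : (w2 h).length = 2 := rfl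

include hs1 hn3 in
lemma walk_ll (u v : V0 n s) : ∃ p : (G' n s).Walk (.inl u) (.inl v), p.length = 4 := by
  obtain ⟨z, h1, h2⟩ := common_nbr hs1 hn3 u v
  exact ⟨(w2 h1).append (w2 h2), by simp [Walk.length_append, w2_length]⟩

include hs1 hn3 in
lemma walk_le (u : V0 n s) (e : EV n s) : ∃ p : (G' n s).Walk (.inl u) (.inr e), p.length = 5 := by
  obtain ⟨pp, qq, hpq, hrep⟩ := edge_rep e
  obtain ⟨p4, hp4⟩ := walk_ll hs1 hn3 u pp
  refine ⟨p4.concat (by rw [G'_adj_lr, hrep]; exact Sym2.mem_mk_left _ _), ?_⟩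
  rw [Walk.length_concat, hp4]

include hs1 hn3 in
lemma walk_re (e f : EV n s) : ∃ p : (G' n s).Walk (.inr e) (.inr f), p.length = 6 := by
  obtain ⟨pp, qq, hpq, hrep⟩ := edge_rep e
  obtain ⟨p5, hp5⟩ := walk_le hs1 hn3 pp f
  refine ⟨Walk.cons (by rw [G'_adj_rl, hrep]; exact Sym2.mem_mk_left _ _) p5, ?_⟩
  rw [Walk.length_cons, hp5]

include hs1 hn3 in
lemma G'_conn : (G' n s).Connected := by
  have hne : Nonempty (V0 n s) := by
    obtain ⟨t, _, ht⟩ := Finset.exists_subset_card_eq (show s ≤ (Finset.univ : Finset (Fin n)).card by simp; omega)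
    exact ⟨⟨t, ht⟩⟩
  rw [SimpleGraph.connected_iff]
  constructor
  · rintro (u|e) (v|f)
    · obtain ⟨p, -⟩ := walk_ll hs1 hn3 u v; exact ⟨p⟩
    · obtain ⟨p, -⟩ := walk_le hs1 hn3 u f; exact ⟨p⟩
    · obtain ⟨p, -⟩ := walk_le hs1 hn3 v e; exact ⟨p.reverse⟩
    · obtain ⟨p, -⟩ := walk_re hs1 hn3 e f; exact ⟨p⟩
  · obtain ⟨u⟩ := hne
    exact ⟨.inl u⟩

lemma adj_isLeft {x y : V' n s} (h : (G' n s).Adj x y) :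
    (if x.isLeft then 1 else 0) + (if y.isLeft then 1 else 0) = 1 := by
  match x, y with
  | .inl u, .inl v => exact absurd h G'_adj_ll
  | .inr e, .inr f => exact absurd h G'_adj_rr
  | .inl u, .inr e => simp
  | .inr e, .inl u => simp

lemma count_parity {a b : V' n s} (p : (G' n s).Walk a b) :
    2 * (p.support.countP (fun x => x.isLeft)) =
      p.length + (if a.isLeft then 1 else 0) + (if b.isLeft then 1 else 0) := by
  induction p with
  | nil =>
    rw [Walk.support_nil, Walk.length_nil]
    simp only [List.countP_cons, List.countP_nil]
    split_ifs <;> simp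
  | @cons a x b hadj q ih =>
    rw [Walk.support_cons, List.countP_cons, Walk.length_cons]
    have hax := adj_isLeft hadj
    by_cases ha : (Sum.isLeft a) <;> by_cases hx : (Sum.isLeft x) <;>
      by_cases hb : (Sum.isLeft b) <;> simp only [ha, hx, hb, if_true, if_false] at hax ih ⊢ <;>
      simp at hax ih ⊢ <;> omega

include hs1 hn3 in
lemma isom_count {a b : V' n s} (p : (G' n s).Walk a b) (hp : p.IsPath)
    (hd : p.length = (G' n s).dist a b) :
    {x | x ∈ p.support ∧ x ∈ Set.range (Sum.inl : V0 n s → V' n s)}.ncard ≤ 3 := by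
  have hbound : p.length + (if a.isLeft then 1 else 0) + (if b.isLeft then 1 else 0) ≤ 7 := by
    match a, b with
    | .inl u, .inl v =>
      obtain ⟨q, hq⟩ := walk_ll hs1 hn3 u v
      have := SimpleGraph.dist_le q
      simp only [Sum.isLeft]
      simp only [if_true, Bool.false_eq_true, if_false]
      omega
    | .inl u, .inr f =>
      obtain ⟨q, hq⟩ := walk_le hs1 hn3 u f
      have := SimpleGraph.dist_le q
      simp only [Sum.isLeft]
      simp only [if_true, Bool.false_eq_true, if_false]
      omega
    | .inr e, .inl v =>
      obtain ⟨q, hq⟩ := walk_le hs1 hn3 v e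
      have := SimpleGraph.dist_le q.reverse
      rw [Walk.length_reverse, hq] at this
      simp only [Sum.isLeft]
      simp only [if_true, Bool.false_eq_true, if_false]
      omega
    | .inr e, .inr f =>
      obtain ⟨q, hq⟩ := walk_re hs1 hn3 e f
      have := SimpleGraph.dist_le q
      simp only [Sum.isLeft]
      simp only [if_true, Bool.false_eq_true, if_false]
      omega
  have hpar := count_parity p
  have hcnt : p.support.countP (fun x => x.isLeft) ≤ 3 := by omega
  have hset : {x | x ∈ p.support ∧ x ∈ Set.range (Sum.inl : V0 n s → V' n s)} =
      ↑((p.support.filter (fun x => x.isLeft)).toFinset) := by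
    ext x
    simp only [Set.mem_setOf_eq, Finset.coe_sort_coe, List.coe_toFinset, Set.mem_setOf_eq,
      List.mem_filter]
    constructor
    · rintro ⟨hx, u, rfl⟩
      exact ⟨hx, rfl⟩
    · rintro ⟨hx, hl⟩
      refine ⟨hx, ?_⟩
      match x with
      | .inl u => exact ⟨u, rfl⟩
      | .inr e => simp at hl
  rw [hset, Set.ncard_coe_finset]
  calc (p.support.filter (fun x => x.isLeft)).toFinset.card
      ≤ (p.support.filter (fun x => x.isLeft)).length := List.toFinset_card_le _
    _ = p.support.countP (fun x => x.isLeft) := by rw [List.countP_eq_length_filter]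
    _ ≤ 3 := hcnt

end Geometry


section Iso

variable {W W2 : Type*} (G0 : SimpleGraph W) (e : W ≃ W2)

lemma mapG_adj (a b : W) : (G0.map e.toEmbedding).Adj (e a) (e b) ↔ G0.Adj a b := by
  rw [SimpleGraph.map_adj]
  constructor
  · rintro ⟨a', b', h, ha, hb⟩
    simp only [Equiv.coe_toEmbedding] at ha hb
    obtain rfl := e.injective ha
    obtain rfl := e.injective hb
    exact h
  · intro h
    exact ⟨a, b, h, rfl, rfl⟩

lemma mapG_adj' (x y : W2) : (G0.map e.toEmbedding).Adj x y ↔ G0.Adj (e.symm x) (e.symm y) := by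
  have := mapG_adj G0 e (e.symm x) (e.symm y)
  rwa [e.apply_symm_apply, e.apply_symm_apply] at this

def homTo : G0 →g G0.map e.toEmbedding :=
  ⟨e, fun h => (mapG_adj G0 e _ _).2 h⟩

def homFrom : G0.map e.toEmbedding →g G0 :=
  ⟨e.symm, fun h => (mapG_adj' G0 e _ _).1 h⟩

lemma mapG_conn (h : G0.Connected) : (G0.map e.toEmbedding).Connected :=
  h.map (homTo G0 e) (fun x => ⟨e.symm x, e.apply_symm_apply x⟩)

lemma mapG_reach {a b : W} : (G0.map e.toEmbedding).Reachable (e a) (e b) ↔ G0.Reachable a b := by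
  constructor
  · rintro ⟨q⟩
    exact ⟨(q.map (homFrom G0 e)).copy (e.symm_apply_apply a) (e.symm_apply_apply b)⟩
  · rintro ⟨q⟩
    exact ⟨q.map (homTo G0 e)⟩

lemma mapG_dist (a b : W) : (G0.map e.toEmbedding).dist (e a) (e b) = G0.dist a b := by
  by_cases hr : G0.Reachable a b
  · apply le_antisymm
    · obtain ⟨p, hp⟩ := hr.exists_walk_length_eq_dist
      calc (G0.map e.toEmbedding).dist (e a) (e b) ≤ (p.map (homTo G0 e)).length :=
            SimpleGraph.dist_le _
        _ = G0.dist a b := by simp [hp]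
    · obtain ⟨q, hq⟩ := ((mapG_reach G0 e).2 hr).exists_walk_length_eq_dist
      have hq' := q.map (homFrom G0 e)
      have : G0.dist (e.symm (e a)) (e.symm (e b)) ≤ (q.map (homFrom G0 e)).length :=
        SimpleGraph.dist_le _
      simp only [Equiv.symm_apply_apply] at this
      calc G0.dist a b ≤ (q.map (homFrom G0 e)).length := this
        _ = (G0.map e.toEmbedding).dist (e a) (e b) := by simp [hq]
  · rw [SimpleGraph.dist_eq_zero_of_not_reachable hr,
      SimpleGraph.dist_eq_zero_of_not_reachable (fun h => hr ((mapG_reach G0 e).1 h))]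

lemma mapG_copswin {j : ℕ} (h : CopsWin (G0.map e.toEmbedding) j) : CopsWin G0 j := by
  obtain ⟨CS, hw⟩ := h
  refine ⟨{ init := fun i => e.symm (CS.init i)
            move := fun c r i => e.symm (CS.move (fun i' => e (c i')) (e r) i)
            valid := ?_ }, ?_⟩
  · intro c r i
    rcases CS.valid (fun i' => e (c i')) (e r) i with h | h
    · left
      show e.symm (CS.move (fun i' => e (c i')) (e r) i) = c i
      rw [h]; simp
    · right
      rw [← (mapG_adj G0 e _ _)]
      simpa using h
  · intro RS'
    set RS : RobStrat (G0.map e.toEmbedding) j :=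
      { init := fun c => e (RS'.init (fun i => e.symm (c i)))
        move := fun c r => e (RS'.move (fun i => e.symm (c i)) (e.symm r))
        valid := by
          intro c r
          rcases RS'.valid (fun i => e.symm (c i)) (e.symm r) with h | h
          · left
            show e (RS'.move (fun i => e.symm (c i)) (e.symm r)) = r
            rw [h]; simp
          · right
            have := (mapG_adj G0 e _ _).2 h
            simpa using this } with hRS
    have key : ∀ m, gplay CS.init CS.move RS.init RS.move m =
        (fun i => e ((gplay (fun i => e.symm (CS.init i))
            (fun c r i => e.symm (CS.move (fun i' => e (c i')) (e r) i))
            RS'.init RS'.move m).1 i),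
          e ((gplay (fun i => e.symm (CS.init i))
            (fun c r i => e.symm (CS.move (fun i' => e (c i')) (e r) i))
            RS'.init RS'.move m).2)) := by
      intro m
      induction m with
      | zero =>
        simp only [gplay, hRS]
        exact Prod.ext (by funext i; simp) (by simp)
      | succ m ih =>
        simp only [gplay, ih]
        simp [hRS, Function.comp]
    obtain ⟨m, i, hc⟩ := hw RS
    refine ⟨m, i, ?_⟩
    rw [key m] at hc
    rcases hc with hc | hc
    · left
      have := congrArg e.symm hc
      simpa using this
    · right
      have := congrArg e.symm hc
      simpa [hRS] using this

lemma copswin_full {N : ℕ} (G : SimpleGraph (Fin N)) : CopsWin G N := by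
  refine ⟨{ init := fun i => i, move := fun c r i => c i, valid := fun c r i => Or.inl rfl }, ?_⟩
  intro RS
  exact ⟨0, RS.init (fun i => i), Or.inl rfl⟩

end Iso


lemma nbhd_inr (ee : EV n s) : ((G' n s).neighborSet (.inr ee)).ncard ≤ 3 := by
  obtain ⟨p, q, hpq, hrep⟩ := edge_rep ee
  have hsub : (G' n s).neighborSet (.inr ee) ⊆ {Sum.inl p, Sum.inl q} := by
    intro x hx
    rw [SimpleGraph.mem_neighborSet] at hx
    match x with
    | .inl a =>
      rw [G'_adj_rl, hrep, Sym2.mem_iff] at hx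
      rcases hx with rfl | rfl <;> simp
    | .inr f => exact absurd hx G'_adj_rr
  calc ((G' n s).neighborSet (.inr ee)).ncard ≤ ({Sum.inl p, Sum.inl q} : Set (V' n s)).ncard :=
        Set.ncard_le_ncard hsub ((Set.finite_singleton _).insert _)
    _ ≤ 2 := by
        calc _ ≤ ({Sum.inl q} : Set (V' n s)).ncard + 1 := Set.ncard_insert_le _ _
        _ ≤ 2 := by rw [Set.ncard_singleton]
    _ ≤ 3 := by omega

lemma closed_nbhd_inl (u : V0 n s) :
    ((insert (Sum.inl u : V' n s) ((G' n s).neighborSet (.inl u))) ∩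
      Set.range (Sum.inl : V0 n s → V' n s)) = {Sum.inl u} := by
  ext x
  simp only [Set.mem_inter_iff, Set.mem_insert_iff, SimpleGraph.mem_neighborSet,
    Set.mem_range, Set.mem_singleton_iff]
  constructor
  · rintro ⟨h1 | h2, v, rfl⟩
    · exact h1
    · exact absurd h2 G'_adj_ll
  · rintro rfl
    exact ⟨Or.inl rfl, u, rfl⟩

section Iso2
variable {W W2 : Type*} (G0 : SimpleGraph W) (e : W ≃ W2)

lemma mapG_nbhd (w : W) :
    (G0.map e.toEmbedding).neighborSet (e w) = ⇑e '' (G0.neighborSet w) := by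
  ext y
  rw [SimpleGraph.mem_neighborSet, mapG_adj' G0 e, Equiv.symm_apply_apply]
  constructor
  · intro h
    exact ⟨e.symm y, h, by simp⟩
  · rintro ⟨z, hz, rfl⟩
    simpa using hz

end Iso2

end CopWork

open CopWork in
theorem exists_graph_rules_fail_large_copNumber' :
    ∀ k : ℕ, ∃ (n : ℕ) (G : SimpleGraph (Fin n)) (U : Set (Fin n)),
      G.Connected ∧
      (∀ ⦃x y : Fin n⦄, G.Adj x y → x ∈ U ∨ y ∈ U) ∧
      (∀ v, v ∉ U → (G.neighborSet v).ncard ≤ 3) ∧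
      (∀ v ∈ U, ((insert v (G.neighborSet v)) ∩ U).ncard ≤ 3) ∧
      (∀ (a b : Fin n) (p : G.Walk a b), p.IsPath → p.length = G.dist a b →
        {x | x ∈ p.support ∧ x ∈ U}.ncard ≤ 3) ∧
      k < copNumber G := by
  intro k
  classical
  set s : ℕ := k + 1 with hs
  set n : ℕ := 4 * (k+1)^2 with hn
  have hs1 : 1 ≤ s := by omega
  have hn3 : 3 * s ≤ n := by rw [hs, hn]; nlinarith
  set W := V' n s with hW
  set N := Fintype.card W with hN
  set e : W ≃ Fin N := Fintype.equivFin W with he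
  set GG : SimpleGraph (Fin N) := (G' n s).map e.toEmbedding with hGG
  set U : Set (Fin N) := ⇑e '' Set.range (Sum.inl : V0 n s → V' n s) with hU
  refine ⟨N, GG, U, ?_, ?_, ?_, ?_, ?_, ?_⟩
  · exact mapG_conn _ e (G'_conn hs1 hn3)
  · intro x y hxy
    rw [hGG, mapG_adj' (G' n s) e] at hxy
    rcases hsx : e.symm x with u | ee
    · left
      exact ⟨Sum.inl u, ⟨u, rfl⟩, by rw [← hsx]; simp⟩
    · rcases hsy : e.symm y with v | ff
      · right
        exact ⟨Sum.inl v, ⟨v, rfl⟩, by rw [← hsy]; simp⟩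
      · rw [hsx, hsy] at hxy
        exact absurd hxy G'_adj_rr
  · intro v hv
    rcases hsv : e.symm v with u | ee
    · exfalso
      exact hv ⟨Sum.inl u, ⟨u, rfl⟩, by rw [← hsv]; simp⟩
    · have hv' : v = e (Sum.inr ee) := by rw [← hsv]; simp
      rw [hv', hGG, mapG_nbhd (G' n s) e, Set.ncard_image_of_injective _ e.injective]
      exact nbhd_inr ee
  · intro v hv
    obtain ⟨w, hw, rfl⟩ := hv
    obtain ⟨u, rfl⟩ := hw
    have hset : (insert (e (Sum.inl u)) (GG.neighborSet (e (Sum.inl u)))) ∩ U =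
        ⇑e '' ((insert (Sum.inl u : V' n s) ((G' n s).neighborSet (.inl u))) ∩
          Set.range (Sum.inl : V0 n s → V' n s)) := by
      rw [Set.image_inter e.injective, Set.image_insert_eq, hGG,
        mapG_nbhd (G' n s) e, hU]
    rw [hset, closed_nbhd_inl, Set.ncard_image_of_injective _ e.injective,
      Set.ncard_singleton]
    omega
  · intro a b p hp hd
    set q := p.map (homFrom (G' n s) e) with hq
    have hqpath : q.IsPath := Walk.map_isPath_of_injective (fun x y hxy => by
      have : e.symm x = e.symm y := hxy
      simpa using congrArg e this) hp
    have hqlen : q.length = (G' n s).dist (e.symm a) (e.symm b) := by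
      have h1 : q.length = p.length := by simp [hq]
      have h2 := mapG_dist (G' n s) e (e.symm a) (e.symm b)
      simp only [Equiv.apply_symm_apply] at h2
      rw [h1, hd]
      exact h2
    have hcount := isom_count hs1 hn3 q hqpath hqlen
    have hseteq : {x | x ∈ p.support ∧ x ∈ U} =
        ⇑e '' {x | x ∈ q.support ∧ x ∈ Set.range (Sum.inl : V0 n s → V' n s)} := by
      ext y
      simp only [Set.mem_setOf_eq, Set.mem_image]
      constructor
      · rintro ⟨hy1, hy2⟩
        refine ⟨e.symm y, ⟨?_, ?_⟩, by simp⟩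
        · rw [hq, Walk.support_map]
          exact List.mem_map.2 ⟨y, hy1, rfl⟩
        · obtain ⟨w, ⟨u, rfl⟩, rfl⟩ := hy2
          exact ⟨u, by simp [homFrom]⟩
      · rintro ⟨z, ⟨hz1, hz2⟩, rfl⟩
        constructor
        · rw [hq, Walk.support_map] at hz1
          obtain ⟨y', hy', hyz⟩ := List.mem_map.1 hz1
          have : y' = e z := by
            have : e.symm y' = z := hyz
            simpa using congrArg e this
          rwa [← this]
        · exact ⟨z, hz2, rfl⟩
    rw [hseteq, Set.ncard_image_of_injective _ e.injective]
    exact hcount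
  · have hfull : CopsWin GG N := copswin_full GG
    by_contra hle
    push_neg at hle
    have hmem : sInf {m | CopsWin GG m} ∈ {m | CopsWin GG m} := Nat.sInf_mem ⟨N, hfull⟩
    have hwin : CopsWin GG (sInf {m | CopsWin GG m}) := hmem
    have hwin' : CopsWin (G' n s) (sInf {m | CopsWin GG m}) := mapG_copswin _ e hwin
    unfold copNumber at hle
    exact no_copswin hs hn hle hwin'


/-- For every `k` there is a connected graph `G` with a vertex cover `U` such that every
vertex outside `U` has at most 3 neighbours, every `v ∈ U` has `|N[v] ∩ U| ≤ 3`, every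
isometric path contains at most 3 vertices of `U`, and yet `c(G) > k`. -/
theorem exists_graph_rules_fail_large_copNumber :
    ∀ k : ℕ, ∃ (n : ℕ) (G : SimpleGraph (Fin n)) (U : Set (Fin n)),
      G.Connected ∧
      (∀ ⦃x y : Fin n⦄, G.Adj x y → x ∈ U ∨ y ∈ U) ∧
      (∀ v, v ∉ U → (G.neighborSet v).ncard ≤ 3) ∧
      (∀ v ∈ U, ((insert v (G.neighborSet v)) ∩ U).ncard ≤ 3) ∧
      (∀ (a b : Fin n) (p : G.Walk a b), p.IsPath → p.length = G.dist a b →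
        {x | x ∈ p.support ∧ x ∈ U}.ncard ≤ 3) ∧
      k < copNumber G := by
  exact exists_graph_rules_fail_large_copNumber'
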